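/- Let C_A, C_B ⊆ F_2^n be linear codes of minimum distance at least d_1, and let c = c_a + c_b where c_a has columns in C_A supported on [n] × I_b and c_b has rows in C_B supported on I_a × [n], with |I_a|, |I_b| < d_1/2. Then the total Hamming weight of c satisfies |c| ≥ (d_1/2)·(N_a + N_b), where N_a is the number of nonzero columns of c_a and N_b the number of nonzero rows of c_b. -/

import Mathlib

lemma fiber_bound {γ β : Type*} [DecidableEq γ] [DecidableEq β] (s : Finset γ) (key : γ → β)
    (J : Finset β) (m : ℕ) (h : ∀ j ∈ J, m ≤ (s.filter fun p => key p = j).card) :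
    J.card * m ≤ s.card := by
  calc J.card * m = ∑ _j ∈ J, m := by rw [Finset.sum_const, smul_eq_mul]
    _ ≤ ∑ j ∈ J, (s.filter fun p => key p = j).card := Finset.sum_le_sum h
    _ = (J.biUnion fun j => s.filter fun p => key p = j).card := by
        rw [Finset.card_biUnion]
        intro a _ b _ hab
        simp only [Finset.disjoint_left, Finset.mem_filter]
        rintro x ⟨_, rfl⟩ ⟨_, h2⟩
        exact hab h2
    _ ≤ s.card := Finset.card_le_card (by
        intro x hx
        rcases Finset.mem_biUnion.mp hx with ⟨j, _, hj⟩
        exact (Finset.mem_filter.mp hj).1)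

/-- Let `C_A, C_B ⊆ F₂ⁿ` have minimum distance at least `d₁`, and let
`c = c_a + c_b` where `c_a` has columns in `C_A` supported on `[n] × I_b` and `c_b` has
rows in `C_B` supported on `I_a × [n]`, with `|I_a|, |I_b| < d₁/2`. Then the Hamming
weight of `c` satisfies `|c| ≥ (d₁/2)·(N_a + N_b)` (stated as `d₁·(N_a+N_b) ≤ 2·|c|`),
where `N_a` is the number of nonzero columns of `c_a` and `N_b` the number of nonzero
rows of `c_b`. -/
theorem stmt_8 (n d1 : ℕ)
    (CA CB : Submodule (ZMod 2) (Fin n → ZMod 2))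
    (hdA : ∀ v ∈ CA, v ≠ 0 → d1 ≤ hammingNorm v)
    (hdB : ∀ v ∈ CB, v ≠ 0 → d1 ≤ hammingNorm v)
    (c ca cb : Matrix (Fin n) (Fin n) (ZMod 2))
    (Ia Ib : Finset (Fin n)) (hIa : 2 * Ia.card < d1) (hIb : 2 * Ib.card < d1)
    (hca : ∀ j, (fun i => ca i j) ∈ CA) (hcasupp : ∀ i j, ca i j ≠ 0 → j ∈ Ib)
    (hcb : ∀ i, (fun j => cb i j) ∈ CB) (hcbsupp : ∀ i j, cb i j ≠ 0 → i ∈ Ia)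
    (hsum : c = ca + cb) :
    d1 * ((Finset.univ.filter fun j => ∃ i, ca i j ≠ 0).card +
          (@Finset.filter _ (fun i => ∃ j, cb i j ≠ 0)
            (fun _ => Nat.decidableExistsFin _) Finset.univ).card) ≤
      2 * (Finset.univ.filter fun p : Fin n × Fin n => c p.1 p.2 ≠ 0).card := by
  classical
  set S := Finset.univ.filter fun p : Fin n × Fin n => c p.1 p.2 ≠ 0 with hS
  set SA := S.filter fun p => p.1 ∉ Ia with hSA
  set SB := S.filter fun p => ¬ p.1 ∉ Ia with hSB
  have hsplit : SA.card + SB.card = S.card :=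
    Finset.card_filter_add_card_filter_not _
  -- column bound
  have hcolA : ∀ j ∈ (Finset.univ.filter fun j => ∃ i, ca i j ≠ 0),
      d1 - Ia.card ≤ (SA.filter fun p => p.2 = j).card := by
    intro j hj
    rcases Finset.mem_filter.mp hj with ⟨-, i0, hi0⟩
    have hvne : (fun i => ca i j) ≠ 0 := by
      intro h; exact hi0 (congrFun h i0)
    have hd : d1 ≤ (Finset.univ.filter fun i => ca i j ≠ 0).card :=
      hdA _ (hca j) hvne
    have hsub : ((Finset.univ.filter fun i => ca i j ≠ 0) \ Ia).card
        ≤ (SA.filter fun p => p.2 = j).card := by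
      apply Finset.card_le_card_of_injOn (fun i => (i, j))
      · intro i hi
        rcases Finset.mem_sdiff.mp hi with ⟨hi1, hi2⟩
        have hca0 : ca i j ≠ 0 := (Finset.mem_filter.mp hi1).2
        have hcb0 : cb i j = 0 := by
          by_contra h; exact hi2 (hcbsupp i j h)
        have : c i j ≠ 0 := by
          rw [hsum]; simpa [Matrix.add_apply, hcb0] using hca0
        simp [hSA, hS, this, hi2]
      · intro a _ b _ hab; exact (Prod.mk.injEq .. ▸ hab).1
    calc d1 - Ia.card ≤ (Finset.univ.filter fun i => ca i j ≠ 0).card - Ia.card :=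
          Nat.sub_le_sub_right hd _
      _ ≤ ((Finset.univ.filter fun i => ca i j ≠ 0) \ Ia).card := Finset.le_card_sdiff _ _
      _ ≤ _ := hsub
  have hA : (Finset.univ.filter fun j => ∃ i, ca i j ≠ 0).card * (d1 - Ia.card) ≤ SA.card :=
    fiber_bound SA (fun p => p.2) _ _ hcolA
  -- row bound
  have hrowB : ∀ i ∈ (@Finset.filter _ (fun i => ∃ j, cb i j ≠ 0)
            (fun _ => Nat.decidableExistsFin _) Finset.univ),
      d1 - Ib.card ≤ (SB.filter fun p => p.1 = i).card := by
    intro i hi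
    rcases (show i ∈ Finset.univ ∧ ∃ j, cb i j ≠ 0 by simpa using hi) with ⟨-, j0, hj0⟩
    have hiIa : i ∈ Ia := hcbsupp i j0 hj0
    have hvne : (fun j => cb i j) ≠ 0 := by
      intro h; exact hj0 (congrFun h j0)
    have hd : d1 ≤ (Finset.univ.filter fun j => cb i j ≠ 0).card :=
      hdB _ (hcb i) hvne
    have hsub : ((Finset.univ.filter fun j => cb i j ≠ 0) \ Ib).card
        ≤ (SB.filter fun p => p.1 = i).card := by
      apply Finset.card_le_card_of_injOn (fun j => (i, j))
      · intro j hj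
        rcases Finset.mem_sdiff.mp hj with ⟨hj1, hj2⟩
        have hcb0 : cb i j ≠ 0 := (Finset.mem_filter.mp hj1).2
        have hca0 : ca i j = 0 := by
          by_contra h; exact hj2 (hcasupp i j h)
        have : c i j ≠ 0 := by
          rw [hsum]; simpa [Matrix.add_apply, hca0] using hcb0
        simp [hSB, hS, this, hiIa]
      · intro a _ b _ hab; exact (Prod.mk.injEq .. ▸ hab).2
    calc d1 - Ib.card ≤ (Finset.univ.filter fun j => cb i j ≠ 0).card - Ib.card :=
          Nat.sub_le_sub_right hd _
      _ ≤ ((Finset.univ.filter fun j => cb i j ≠ 0) \ Ib).card := Finset.le_card_sdiff _ _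
      _ ≤ _ := hsub
  have hB : (@Finset.filter _ (fun i => ∃ j, cb i j ≠ 0)
            (fun _ => Nat.decidableExistsFin _) Finset.univ).card * (d1 - Ib.card) ≤ SB.card :=
    fiber_bound SB (fun p => p.1) _ _ hrowB
  have h1 : d1 ≤ 2 * (d1 - Ia.card) := by omega
  have h2 : d1 ≤ 2 * (d1 - Ib.card) := by omega
  set NA := (Finset.univ.filter fun j => ∃ i, ca i j ≠ 0).card
  set NB := (@Finset.filter _ (fun i => ∃ j, cb i j ≠ 0)
            (fun _ => Nat.decidableExistsFin _) Finset.univ).card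
  calc d1 * (NA + NB) = NA * d1 + NB * d1 := by ring
    _ ≤ NA * (2 * (d1 - Ia.card)) + NB * (2 * (d1 - Ib.card)) := by
        exact Nat.add_le_add (Nat.mul_le_mul_left _ h1) (Nat.mul_le_mul_left _ h2)
    _ = 2 * (NA * (d1 - Ia.card)) + 2 * (NB * (d1 - Ib.card)) := by ring
    _ ≤ 2 * SA.card + 2 * SB.card := by
        exact Nat.add_le_add (Nat.mul_le_mul_left _ hA) (Nat.mul_le_mul_left _ hB)
    _ = 2 * S.card := by omega
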